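/- Let n, q ∈ ℕ, let f : ℝⁿ × ℝ^q → ℝⁿ, let U ⊆ ℝ^q be a nonempty input-constraint set, and write f̄(x) := f(x,0). Let h : ℝⁿ → ℝ, m ≥ 1, and φ_1,…,φ_m ∈ (0,1]. Define ψ_0 := h; for l = 1,…,m−1, ψ_l(x) := ψ_{l−1}(f̄(x)) − ψ_{l−1}(x) + φ_l ψ_{l−1}(x); and ψ_m(x,u) := ψ_{m−1}(f(x,u)) − ψ_{m−1}(x) + φ_m ψ_{m−1}(x). Define C^l := {x ∈ ℝⁿ : ψ_l(x) ≥ 0} for l = 0,…,m−1. Assume (RD): for all x ∈ ℝⁿ, all u ∈ U and all 0 ≤ l ≤ m−2, h(f̄^l(f(x,u))) = h(f̄^{l+1}(x)). Assume (A1): for every x ∈ ℝⁿ there exists u^M ∈ U with ψ_m(x, u^M) ≥ 0. Then for every initial state x₀ ∈ ⋂_{l=0}^{m−1} C^l there exist sequences u : ℕ → ℝ^q and x : ℕ → ℝⁿ with x(0) = x₀, u(t) ∈ U and x(t+1) = f(x(t), u(t)) for all t ∈ ℕ, such that ψ_m(x(t), u(t)) ≥ 0 and x(t) ∈ ⋂_{l=0}^{m−1}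 C^l for all t ∈ ℕ; in particular h(x(t)) ≥ 0 for all t ∈ ℕ. -/
import Mathlib


/-- Recursive feasibility of the DHCBF safety constraint: under (RD) and
Assumption 1, from any initial state in the intersection of the safe sets
there exist admissible input and state sequences of the closed-loop system
satisfying the DHCBF constraint and remaining in all safe sets at all times;
in particular `h(x(t)) ≥ 0` for all `t`. -/
theorem dhcbf_recursive_feasibility
    (n q : ℕ) (f : (Fin n → ℝ) → (Fin q → ℝ) → (Fin n → ℝ))
    (U : Set (Fin q → ℝ)) (hU : U.Nonempty)
    (h : (Fin n → ℝ) → ℝ) (m : ℕ) (hm : 1 ≤ m) (φ : ℕ → ℝ)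
    (hφ : ∀ l : ℕ, 1 ≤ l → l ≤ m → 0 < φ l ∧ φ l ≤ 1)
    (ψ : ℕ → (Fin n → ℝ) → ℝ)
    (hψ0 : ψ 0 = h)
    (hψ : ∀ l : ℕ, l < m - 1 → ∀ x,
      ψ (l + 1) x = ψ l (f x 0) - ψ l x + φ (l + 1) * ψ l x)
    (hRD : ∀ x : Fin n → ℝ, ∀ u ∈ U, ∀ l : ℕ, l + 2 ≤ m →
      h ((fun y => f y 0)^[l] (f x u)) = h ((fun y => f y 0)^[l + 1] x))
    (hA1 : ∀ x : Fin n → ℝ, ∃ uM ∈ U,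
      ψ (m - 1) (f x uM) - ψ (m - 1) x + φ m * ψ (m - 1) x ≥ 0) :
    ∀ x₀ : Fin n → ℝ, (∀ l < m, ψ l x₀ ≥ 0) →
      ∃ u : ℕ → (Fin q → ℝ), ∃ x : ℕ → (Fin n → ℝ),
        x 0 = x₀ ∧ (∀ t : ℕ, u t ∈ U) ∧
        (∀ t : ℕ, x (t + 1) = f (x t) (u t)) ∧
        (∀ t : ℕ,
          ψ (m - 1) (f (x t) (u t)) - ψ (m - 1) (x t)
            + φ m * ψ (m - 1) (x t) ≥ 0) ∧
        (∀ t : ℕ, ∀ l < m, ψ l (x t) ≥ 0) ∧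
        (∀ t : ℕ, h (x t) ≥ 0) := by
  set fb : (Fin n → ℝ) → (Fin n → ℝ) := fun y => f y 0 with hfb
  -- Key lemma: ψ l is unaffected by the input during the first steps.
  have key : ∀ l j : ℕ, l + j + 2 ≤ m → ∀ x : Fin n → ℝ, ∀ u ∈ U,
      ψ l (fb^[j] (f x u)) = ψ l (fb^[j + 1] x) := by
    intro l
    induction l with
    | zero =>
      intro j hj x u hu
      simpa [hψ0] using hRD x u hu j (by omega)
    | succ l ih =>
      intro j hj x u hu
      have h1 : l < m - 1 := by omega
      have e1 := hψ l h1 (fb^[j] (f x u))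
      have e2 := hψ l h1 (fb^[j + 1] x)
      have e3 : ψ l (fb (fb^[j] (f x u))) = ψ l (fb (fb^[j + 1] x)) := by
        have := ih (j + 1) (by omega) x u hu
        simpa [← Function.iterate_succ_apply'] using this
      have e4 : ψ l (fb^[j] (f x u)) = ψ l (fb^[j + 1] x) :=
        ih j (by omega) x u hu
      calc ψ (l + 1) (fb^[j] (f x u))
          = ψ l (fb (fb^[j] (f x u))) - ψ l (fb^[j] (f x u))
              + φ (l + 1) * ψ l (fb^[j] (f x u)) := e1
        _ = ψ l (fb (fb^[j + 1] x)) - ψ l (fb^[j + 1] x)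
              + φ (l + 1) * ψ l (fb^[j + 1] x) := by rw [e3, e4]
        _ = ψ (l + 1) (fb^[j + 1] x) := e2.symm
  -- Invariant preservation.
  have step : ∀ x : Fin n → ℝ, ∀ u ∈ U, (∀ l < m, ψ l x ≥ 0) →
      ψ (m - 1) (f x u) - ψ (m - 1) x + φ m * ψ (m - 1) x ≥ 0 →
      ∀ l < m, ψ l (f x u) ≥ 0 := by
    intro x u hu hx hc l hl
    by_cases hcase : l = m - 1
    · subst hcase
      have hφm := hφ m hm le_rfl
      have hx' := hx (m - 1) (by omega)
      nlinarith [hφm.1, hφm.2]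
    · have hl2 : l + 2 ≤ m := by omega
      have hkey := key l 0 (by omega) x u hu
      simp only [Function.iterate_zero_apply, Function.iterate_one] at hkey
      have h1 : l < m - 1 := by omega
      have e := hψ l h1 x
      have hφl := hφ (l + 1) (by omega) (by omega)
      have hx1 := hx (l + 1) (by omega)
      have hx2 := hx l (by omega)
      have hfbx : ψ l (fb x) ≥ 0 := by nlinarith [hφl.1, hφl.2]
      rw [hkey]; exact hfbx
  intro x₀ hx₀
  -- choice of input
  have hc : ∀ x : Fin n → ℝ, ∃ uM, uM ∈ U ∧
      ψ (m - 1) (f x uM) - ψ (m - 1) x + φ m * ψ (m - 1) x ≥ 0 := by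
    intro x; obtain ⟨uM, huM, hge⟩ := hA1 x; exact ⟨uM, huM, hge⟩
  choose c hcU hcge using hc
  let xs : ℕ → (Fin n → ℝ) := fun t => Nat.rec x₀ (fun _ xt => f xt (c xt)) t
  have hxs : ∀ t, xs (t + 1) = f (xs t) (c (xs t)) := fun t => rfl
  have hinv : ∀ t, ∀ l < m, ψ l (xs t) ≥ 0 := by
    intro t
    induction t with
    | zero => exact hx₀
    | succ t ih =>
      rw [hxs t]
      exact step (xs t) (c (xs t)) (hcU (xs t)) ih (hcge (xs t))
  refine ⟨fun t => c (xs t), xs, rfl, fun t => hcU (xs t), hxs,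
    fun t => hcge (xs t), hinv, fun t => ?_⟩
  have := hinv t 0 (by omega)
  simpa [hψ0] using this
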